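/- Let G be an elementary abelian 2-group of rank 3, with basis a, b, c. Then χ(G) is nilpotent of class exactly 3, the subgroup D(G) = ⟨[a,b^φ], [a,c^φ], [b,c^φ], [a,b^φ,c]⟩ is elementary abelian of order 16, and [D(G), G] = ⟨[a,b^φ,c]⟩ has order 2; in particular, D(G) is not powerfully embedded in χ(G) (for p = 2, [D(G), χ(G)] is not contained in D(G)^4 = 1). -/

import Mathlib

open Monoid Coprod

/-- Commutator `[x, y] = x⁻¹ * y⁻¹ * x * y`. -/
def comm' {G : Type*} [Group G] (x y : G) : G := x⁻¹ * y⁻¹ * x * y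

/-- Relators of the presentation of `χ(G)`: `[g, g^φ] = 1` for all `g ∈ G`. -/
def chiRels (G : Type*) [Group G] : Set (Monoid.Coprod G G) :=
  { r | ∃ g : G, r = comm' (inl g) (inr g) }

/-- The weak commutativity group `χ(G)`, the quotient of the free product `G ∗ G^φ`
by the normal closure of `{[g, g^φ] : g ∈ G}`. -/
abbrev chi (G : Type*) [Group G] : Type _ :=
  Monoid.Coprod G G ⧸ Subgroup.normalClosure (chiRels G)

/-- The canonical projection `G ∗ G^φ → χ(G)`. -/
def chiMk (G : Type*) [Group G] : Monoid.Coprod G G →* chi G :=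
  QuotientGroup.mk' _

/-- The image of `G` in `χ(G)`. -/
def chiIota (G : Type*) [Group G] : G →* chi G := (chiMk G).comp inl

/-- The image of `G^φ` in `χ(G)`. -/
def chiIotaPhi (G : Type*) [Group G] : G →* chi G := (chiMk G).comp inr

/-- The subgroup `D(G) = [G, G^φ]` of `χ(G)`. -/
def DSubgroup (G : Type*) [Group G] : Subgroup (chi G) :=
  ⁅(chiIota G).range, (chiIotaPhi G).range⁆

/-- `spow H n` is the subgroup `H^n` generated by all `n`-th powers of elements of `H`. -/
def spow {G : Type*} [Group G] (H : Subgroup G) (n : ℕ) : Subgroup G :=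
  Subgroup.closure {x | ∃ h ∈ H, x = h ^ n}

/-- A finite `p`-group `G` is potent if `γ_{p-1}(G) ≤ G^p` for odd `p`,
or `G' ≤ G^4` for `p = 2`.  (Here `γ_k(G)` is `lowerCentralSeries G (k-1)`.) -/
def IsPotent (p : ℕ) (G : Type*) [Group G] : Prop :=
  if p = 2 then (⊤ : Subgroup G).lowerCentralSeries 1 ≤ spow (⊤ : Subgroup G) 4
  else (⊤ : Subgroup G).lowerCentralSeries (p - 2) ≤ spow (⊤ : Subgroup G) p

/-- A finite `p`-group `G` is powerful if `G' ≤ G^p` for odd `p`, or `G' ≤ G^4` for `p = 2`. -/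
def IsPowerful (p : ℕ) (G : Type*) [Group G] : Prop :=
  if p = 2 then (⊤ : Subgroup G).lowerCentralSeries 1 ≤ spow (⊤ : Subgroup G) 4
  else (⊤ : Subgroup G).lowerCentralSeries 1 ≤ spow (⊤ : Subgroup G) p

set_option maxRecDepth 8000
set_option maxHeartbeats 2000000

open scoped commutatorElement

-- ===== generic lemmas about comm' =====
section CommPrime
variable {Γ : Type*} [Group Γ]

lemma map_comm' {K : Type*} [Group K] (φ : Γ →* K) (x y : Γ) :
    φ (comm' x y) = comm' (φ x) (φ y) := by simp [comm', map_mul, map_inv]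

lemma comm'_eq_one_iff (x y : Γ) : comm' x y = 1 ↔ Commute x y := by
  unfold comm'
  constructor
  · intro h
    have h3 : x * y = y * x := by
      calc x * y = (y * x) * (x⁻¹ * y⁻¹ * x * y) := by group
        _ = (y * x) * 1 := by rw [h]
        _ = y * x := by rw [mul_one]
    exact h3
  · intro h
    calc x⁻¹ * y⁻¹ * x * y = x⁻¹ * y⁻¹ * (x * y) := by group
      _ = x⁻¹ * y⁻¹ * (y * x) := by rw [h.eq]
      _ = 1 := by group

lemma inv_of_sq {x : Γ} (h : x * x = 1) : x⁻¹ = x := inv_eq_of_mul_eq_one_right h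

lemma comm'_of_sq {x y : Γ} (hx : x * x = 1) (hy : y * y = 1) :
    comm' x y = x * y * (x * y) := by
  unfold comm'; rw [inv_of_sq hx, inv_of_sq hy]; group

lemma brk_eq {x y : Γ} (hx : x * x = 1) (hy : y * y = 1) :
    ⁅x, y⁆ = x * y * (x * y) := by
  rw [commutatorElement_def, inv_of_sq hx, inv_of_sq hy]; group

lemma conj_eq_of_commute {g x : Γ} (h : Commute g x) : g * x * g⁻¹ = x := by
  rw [h.eq]; group

lemma comm_mem_iff {H : Type*} [Group H] (N : Subgroup H) [N.Normal] (x y : H) :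
    ⁅x, y⁆ ∈ N ↔ Commute ((QuotientGroup.mk' N) x) ((QuotientGroup.mk' N) y) := by
  rw [← commutatorElement_eq_one_iff_commute, ← map_commutatorElement,
    ← MonoidHom.mem_ker, QuotientGroup.ker_mk']

lemma conj_closure_stable {s : Γ} {S : Set Γ}
    (h : ∀ x ∈ S, s * x * s⁻¹ ∈ Subgroup.closure S) :
    ∀ e ∈ Subgroup.closure S, s * e * s⁻¹ ∈ Subgroup.closure S := by
  intro e he
  induction he using Subgroup.closure_induction with
  | mem x hx => exact h x hx
  | one => simpa using one_mem _
  | mul x y hx hy ihx ihy =>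
      have hxy : s * (x * y) * s⁻¹ = (s * x * s⁻¹) * (s * y * s⁻¹) := by group
      rw [hxy]; exact mul_mem ihx ihy
  | inv x hx ih =>
      have hxi : s * x⁻¹ * s⁻¹ = (s * x * s⁻¹)⁻¹ := by group
      rw [hxi]; exact inv_mem ih

end CommPrime

-- ===== exponent-2 homomorphism machinery =====
abbrev M2 := Multiplicative (ZMod 2)

section Homs
variable {Γ : Type*} [Group Γ]

def expHom (x : Γ) (hx : x * x = 1) : M2 →* Γ :=
  MonoidHom.mk' (fun v => x ^ (Multiplicative.toAdd v).val) (by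
    intro u v
    have h2 : x ^ 2 = 1 := by rw [pow_two, hx]
    have key : ∀ n : ℕ, x ^ (n % 2) = x ^ n := by
      intro n
      conv_rhs => rw [← Nat.div_add_mod n 2]
      rw [pow_add, pow_mul, h2, one_pow, one_mul]
    show x ^ (Multiplicative.toAdd (u * v)).val = _
    rw [toAdd_mul, ZMod.val_add, key, pow_add])

@[simp] lemma expHom_apply (x : Γ) (hx : x * x = 1) (v : M2) :
    expHom x hx v = x ^ (Multiplicative.toAdd v).val := rfl

def tripleHom (x y z : Γ) (hx : x * x = 1) (hy : y * y = 1) (hz : z * z = 1)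
    (cxy : Commute x y) (cxz : Commute x z) (cyz : Commute y z) :
    (M2 × M2 × M2) →* Γ :=
  (expHom x hx).noncommCoprod
    ((expHom y hy).noncommCoprod (expHom z hz) (fun _ _ => by rw [expHom_apply, expHom_apply]; exact Commute.pow_pow cyz _ _))
    (fun m n => by
      rw [MonoidHom.noncommCoprod_apply]
      exact (Commute.pow_pow cxy _ _).mul_right (Commute.pow_pow cxz _ _))

lemma tripleHom_apply (x y z : Γ) (hx : x * x = 1) (hy : y * y = 1) (hz : z * z = 1)
    (cxy : Commute x y) (cxz : Commute x z) (cyz : Commute y z) (v : M2 × M2 × M2) :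
    tripleHom x y z hx hy hz cxy cxz cyz v =
      x ^ (Multiplicative.toAdd v.1).val *
        (y ^ (Multiplicative.toAdd v.2.1).val * z ^ (Multiplicative.toAdd v.2.2).val) := by
  simp [tripleHom, MonoidHom.noncommCoprod_apply]

lemma tripleHom_eval1 (x y z : Γ) (hx : x * x = 1) (hy : y * y = 1) (hz : z * z = 1)
    (cxy : Commute x y) (cxz : Commute x z) (cyz : Commute y z) :
    tripleHom x y z hx hy hz cxy cxz cyz (Multiplicative.ofAdd 1, 1, 1) = x := by
  rw [tripleHom_apply]; simp [show ((1:ZMod 2)).val = 1 from rfl]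

lemma tripleHom_eval2 (x y z : Γ) (hx : x * x = 1) (hy : y * y = 1) (hz : z * z = 1)
    (cxy : Commute x y) (cxz : Commute x z) (cyz : Commute y z) :
    tripleHom x y z hx hy hz cxy cxz cyz (1, Multiplicative.ofAdd 1, 1) = y := by
  rw [tripleHom_apply]; simp [show ((1:ZMod 2)).val = 1 from rfl]

lemma tripleHom_eval3 (x y z : Γ) (hx : x * x = 1) (hy : y * y = 1) (hz : z * z = 1)
    (cxy : Commute x y) (cxz : Commute x z) (cyz : Commute y z) :
    tripleHom x y z hx hy hz cxy cxz cyz (1, 1, Multiplicative.ofAdd 1) = z := by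
  rw [tripleHom_apply]; simp [show ((1:ZMod 2)).val = 1 from rfl]

def quadHom (x y z w : Γ) (hx : x * x = 1) (hy : y * y = 1) (hz : z * z = 1)
    (hw : w * w = 1) (cxy : Commute x y) (cxz : Commute x z) (cxw : Commute x w)
    (cyz : Commute y z) (cyw : Commute y w) (czw : Commute z w) :
    (M2 × M2 × M2 × M2) →* Γ :=
  (expHom x hx).noncommCoprod
    ((expHom y hy).noncommCoprod
      ((expHom z hz).noncommCoprod (expHom w hw) (fun _ _ => by rw [expHom_apply, expHom_apply]; exact Commute.pow_pow czw _ _))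
      (fun m n => by
        rw [MonoidHom.noncommCoprod_apply]
        exact (Commute.pow_pow cyz _ _).mul_right (Commute.pow_pow cyw _ _)))
    (fun m n => by
      rw [MonoidHom.noncommCoprod_apply, MonoidHom.noncommCoprod_apply]
      exact (Commute.pow_pow cxy _ _).mul_right
        ((Commute.pow_pow cxz _ _).mul_right (Commute.pow_pow cxw _ _)))

lemma quadHom_apply (x y z w : Γ) (hx : x * x = 1) (hy : y * y = 1) (hz : z * z = 1)
    (hw : w * w = 1) (cxy : Commute x y) (cxz : Commute x z) (cxw : Commute x w)
    (cyz : Commute y z) (cyw : Commute y w) (czw : Commute z w) (v : M2 × M2 × M2 × M2) :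
    quadHom x y z w hx hy hz hw cxy cxz cxw cyz cyw czw v =
      x ^ (Multiplicative.toAdd v.1).val *
        (y ^ (Multiplicative.toAdd v.2.1).val *
          (z ^ (Multiplicative.toAdd v.2.2.1).val * w ^ (Multiplicative.toAdd v.2.2.2).val)) := by
  simp [quadHom, MonoidHom.noncommCoprod_apply]

end Homs

example : True := trivial
def pX : Equiv.Perm (Fin 32) := ⟨![1,0,7,8,13,22,20,2,3,21,28,31,14,4,12,23,17,16,19,18,6,9,5,15,27,26,25,24,10,30,29,11], ![1,0,7,8,13,22,20,2,3,21,28,31,14,4,12,23,17,16,19,18,6,9,5,15,27,26,25,24,10,30,29,11], by decide, by decide⟩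
def pY : Equiv.Perm (Fin 32) := ⟨![2,7,0,9,22,13,19,1,21,3,17,14,31,5,11,24,28,10,20,6,18,8,4,27,15,29,30,23,16,25,26,12], ![2,7,0,9,22,13,19,1,21,3,17,14,31,5,11,24,28,10,20,6,18,8,4,27,15,29,30,23,16,25,26,12], by decide, by decide⟩
def pZ : Equiv.Perm (Fin 32) := ⟨![3,8,9,0,28,17,14,21,1,2,13,19,20,10,6,29,22,5,31,11,12,7,16,30,25,24,27,26,4,15,23,18], ![3,8,9,0,28,17,14,21,1,2,13,19,20,10,6,29,22,5,31,11,12,7,16,30,25,24,27,26,4,15,23,18], by decide, by decide⟩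
def pXp : Equiv.Perm (Fin 32) := ⟨![4,13,24,29,0,10,11,27,30,18,5,6,25,1,26,16,15,23,9,21,31,19,28,17,2,12,14,7,22,3,8,20], ![4,13,24,29,0,10,11,27,30,18,5,6,25,1,26,16,15,23,9,21,31,19,28,17,2,12,14,7,22,3,8,20], by decide, by decide⟩
def pYp : Equiv.Perm (Fin 32) := ⟨![5,24,13,26,10,0,12,15,18,30,4,25,6,2,29,7,27,22,8,31,21,20,17,28,1,11,3,16,23,14,9,19], ![5,24,13,26,10,0,12,15,18,30,4,25,6,2,29,7,27,22,8,31,21,20,17,28,1,11,3,16,23,14,9,19], by decide, by decide⟩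
def pZp : Equiv.Perm (Fin 32) := ⟨![6,2,1,14,11,12,0,16,9,8,25,4,5,24,3,27,7,20,30,28,17,22,21,31,13,10,29,15,19,26,18,23], ![6,2,1,14,11,12,0,16,9,8,25,4,5,24,3,27,7,20,30,28,17,22,21,31,13,10,29,15,19,26,18,23], by decide, by decide⟩

lemma sKX : pX * pX = 1 := by decide
lemma sKY : pY * pY = 1 := by decide
lemma sKZ : pZ * pZ = 1 := by decide
lemma sKXp : pXp * pXp = 1 := by decide
lemma sKYp : pYp * pYp = 1 := by decide
lemma sKZp : pZp * pZp = 1 := by decide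
lemma cKXY : Commute pX pY := by rw [commute_iff_eq]; decide
lemma cKXZ : Commute pX pZ := by rw [commute_iff_eq]; decide
lemma cKYZ : Commute pY pZ := by rw [commute_iff_eq]; decide
lemma cKXpYp : Commute pXp pYp := by rw [commute_iff_eq]; decide
lemma cKXpZp : Commute pXp pZp := by rw [commute_iff_eq]; decide
lemma cKYpZp : Commute pYp pZp := by rw [commute_iff_eq]; decide

lemma model {G : Type*} [Group G] (h2 : ∀ g : G, g * g = 1) (a b c : G)
    (hbasis : Subgroup.closure {a, b, c} = ⊤) (hcard : Nat.card G = 8) :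
    ∃ ψ : chi G →* Equiv.Perm (Fin 32),
      ψ (chiIota G a) = pX ∧ ψ (chiIota G b) = pY ∧ ψ (chiIota G c) = pZ ∧
      ψ (chiIotaPhi G a) = pXp ∧ ψ (chiIotaPhi G b) = pYp ∧ ψ (chiIotaPhi G c) = pZp := by
  have hGcomm : ∀ g h : G, g * h = h * g := by
    intro g h
    calc g * h = (g * h)⁻¹ := (inv_of_sq (h2 _)).symm
      _ = h⁻¹ * g⁻¹ := by rw [mul_inv_rev]
      _ = h * g := by rw [inv_of_sq (h2 h), inv_of_sq (h2 g)]
  set fG := tripleHom a b c (h2 a) (h2 b) (h2 c) (hGcomm a b) (hGcomm a c) (hGcomm b c)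
    with hfG
  have hrangeTop : fG.range = ⊤ := by
    rw [eq_top_iff, ← hbasis]
    refine (Subgroup.closure_le _).mpr ?_
    intro x hx
    simp only [Set.mem_insert_iff, Set.mem_singleton_iff] at hx
    rcases hx with rfl | rfl | rfl
    · exact ⟨(Multiplicative.ofAdd 1, 1, 1), tripleHom_eval1 ..⟩
    · exact ⟨(1, Multiplicative.ofAdd 1, 1), tripleHom_eval2 ..⟩
    · exact ⟨(1, 1, Multiplicative.ofAdd 1), tripleHom_eval3 ..⟩
  have hcardV3 : Nat.card (M2 × M2 × M2) = 8 := by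
    simp [Nat.card_prod, Nat.card_eq_fintype_card]
  have hbij : Function.Bijective ⇑fG :=
    (Nat.bijective_iff_surjective_and_card ⇑fG).mpr
      ⟨MonoidHom.range_eq_top.mp hrangeTop, by rw [hcardV3, hcard]⟩
  set eG := MulEquiv.ofBijective fG hbij with heG
  set K3 := tripleHom pX pY pZ sKX sKY sKZ cKXY cKXZ cKYZ with hK3
  set K3' := tripleHom pXp pYp pZp sKXp sKYp sKZp cKXpYp cKXpZp cKYpZp with hK3'
  set f : G →* Equiv.Perm (Fin 32) := K3.comp eG.symm.toMonoidHom with hf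
  set f' : G →* Equiv.Perm (Fin 32) := K3'.comp eG.symm.toMonoidHom with hf'
  have hrelK : ∀ v : M2 × M2 × M2, Commute (K3 v) (K3' v) := by
    intro v
    rw [commute_iff_eq, hK3, hK3', tripleHom_apply, tripleHom_apply]
    revert v
    decide
  have hcomm_ff : ∀ g : G, Commute (f g) (f' g) := by
    intro g
    obtain ⟨v, rfl⟩ := eG.surjective g
    have hv : eG.symm (eG v) = v := eG.symm_apply_apply v
    rw [hf, hf']
    simp only [MonoidHom.comp_apply, MulEquiv.coe_toMonoidHom, hv]
    exact hrelK v
  have hker : Subgroup.normalClosure (chiRels G) ≤ (Coprod.lift f f').ker := by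
    apply Subgroup.normalClosure_le_normal
    rintro r ⟨g, rfl⟩
    rw [SetLike.mem_coe, MonoidHom.mem_ker, map_comm', Coprod.lift_apply_inl,
      Coprod.lift_apply_inr, comm'_eq_one_iff]
    exact hcomm_ff g
  have hsyma : eG.symm a = (Multiplicative.ofAdd 1, 1, 1) := by
    rw [MulEquiv.symm_apply_eq]
    exact (tripleHom_eval1 a b c (h2 a) (h2 b) (h2 c) (hGcomm a b) (hGcomm a c)
      (hGcomm b c)).symm
  have hsymb : eG.symm b = (1, Multiplicative.ofAdd 1, 1) := by
    rw [MulEquiv.symm_apply_eq]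
    exact (tripleHom_eval2 a b c (h2 a) (h2 b) (h2 c) (hGcomm a b) (hGcomm a c)
      (hGcomm b c)).symm
  have hsymc : eG.symm c = (1, 1, Multiplicative.ofAdd 1) := by
    rw [MulEquiv.symm_apply_eq]
    exact (tripleHom_eval3 a b c (h2 a) (h2 b) (h2 c) (hGcomm a b) (hGcomm a c)
      (hGcomm b c)).symm
  refine ⟨QuotientGroup.lift _ (Coprod.lift f f') hker, ?_, ?_, ?_, ?_, ?_, ?_⟩
  · show QuotientGroup.lift _ (Coprod.lift f f') hker (chiMk G (inl a)) = pX
    show Monoid.Coprod.lift f f' (inl a) = pX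
    rw [Coprod.lift_apply_inl, hf]
    simp only [MonoidHom.comp_apply, MulEquiv.coe_toMonoidHom, hsyma, hK3]
    exact tripleHom_eval1 ..
  · show QuotientGroup.lift _ (Coprod.lift f f') hker (chiMk G (inl b)) = pY
    show Monoid.Coprod.lift f f' (inl b) = pY
    rw [Coprod.lift_apply_inl, hf]
    simp only [MonoidHom.comp_apply, MulEquiv.coe_toMonoidHom, hsymb, hK3]
    exact tripleHom_eval2 ..
  · show QuotientGroup.lift _ (Coprod.lift f f') hker (chiMk G (inl c)) = pZ
    show Monoid.Coprod.lift f f' (inl c) = pZ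
    rw [Coprod.lift_apply_inl, hf]
    simp only [MonoidHom.comp_apply, MulEquiv.coe_toMonoidHom, hsymc, hK3]
    exact tripleHom_eval3 ..
  · show QuotientGroup.lift _ (Coprod.lift f f') hker (chiMk G (inr a)) = pXp
    show Monoid.Coprod.lift f f' (inr a) = pXp
    rw [Coprod.lift_apply_inr, hf']
    simp only [MonoidHom.comp_apply, MulEquiv.coe_toMonoidHom, hsyma, hK3']
    exact tripleHom_eval1 ..
  · show QuotientGroup.lift _ (Coprod.lift f f') hker (chiMk G (inr b)) = pYp
    show Monoid.Coprod.lift f f' (inr b) = pYp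
    rw [Coprod.lift_apply_inr, hf']
    simp only [MonoidHom.comp_apply, MulEquiv.coe_toMonoidHom, hsymb, hK3']
    exact tripleHom_eval2 ..
  · show QuotientGroup.lift _ (Coprod.lift f f') hker (chiMk G (inr c)) = pZp
    show Monoid.Coprod.lift f f' (inr c) = pZp
    rw [Coprod.lift_apply_inr, hf']
    simp only [MonoidHom.comp_apply, MulEquiv.coe_toMonoidHom, hsymc, hK3']
    exact tripleHom_eval3 ..

section Word

variable {Γ : Type*} [Group Γ]

lemma sq_mul {x y : Γ} (hx : x * x = 1) (hy : y * y = 1) (c : Commute x y) :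
    (x * y) * (x * y) = 1 := by
  calc (x * y) * (x * y) = x * (y * x) * y := by group
    _ = x * (x * y) * y := by rw [← c.eq]
    _ = (x * x) * (y * y) := by group
    _ = 1 := by rw [hx, hy, one_mul]

lemma sq_cj {x g : Γ} (hx : x * x = 1) (hg : g * g = 1) : (g * x * g) * (g * x * g) = 1 := by
  calc (g * x * g) * (g * x * g) = g * x * (g * g) * x * g := by group
    _ = g * (x * x) * g := by rw [hg]; group
    _ = g * g := by rw [hx]; group
    _ = 1 := hg

lemma commute_of_sq_mul {x y : Γ} (hx : x * x = 1) (hy : y * y = 1) (h : (x * y) * (x * y) = 1) :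
    Commute x y := by
  have : x * y = (x * y)⁻¹ := (inv_of_sq h).symm
  rw [mul_inv_rev, inv_of_sq hx, inv_of_sq hy] at this
  exact this

lemma commute_of_cj {x g : Γ} (hg : g * g = 1) (h : g * x * g = x) : Commute x g := by
  have : x * g = g * x := by
    calc x * g = (g * x * g) * g := by rw [h]
      _ = g * x * (g * g) := by group
      _ = g * x := by rw [hg]; group
  exact this

lemma cj_eq_of_commute {x g : Γ} (hg : g * g = 1) (c : Commute g x) : g * x * g = x := by
  calc g * x * g = x * (g * g) := by rw [c.eq]; group
    _ = x := by rw [hg, mul_one]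

lemma commute_unconj {g u v : Γ} (hg : g * g = 1) (hgu : Commute g u)
    (h : Commute u (g * v * g)) : Commute u v := by
  have hginv : g⁻¹ = g := inv_of_sq hg
  have h2 := h.map (MulAut.conj g).toMonoidHom
  simp only [MulEquiv.coe_toMonoidHom, MulAut.conj_apply] at h2
  rw [hginv] at h2
  have e1 : g * u * g = u := cj_eq_of_commute hg hgu
  have e2 : g * (g * v * g) * g = v := by
    calc g * (g * v * g) * g = (g * g) * v * (g * g) := by group
      _ = v := by rw [hg]; group
  rwa [e1, e2] at h2

lemma central_step {g d k t : Γ} (hg : g * g = 1) (hk : g * d * g = k)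
    (ht1 : t = k * d) (ht2 : d * k = t) : Commute t g := by
  have e1 : g * k * g = d := by
    rw [← hk]
    calc g * (g * d * g) * g = (g * g) * d * (g * g) := by group
      _ = d := by rw [hg]; group
  refine commute_of_cj hg ?_
  calc g * t * g = g * (k * d) * g := by rw [ht1]
    _ = g * k * (1 * (d * g)) := by group
    _ = g * k * ((g * g) * (d * g)) := by rw [hg]
    _ = (g * k * g) * (g * d * g) := by group
    _ = d * k := by rw [e1, hk]
    _ = t := ht2

lemma rank2 {X Y X' Y' : Γ}
    (sX : X * X = 1) (sY : Y * Y = 1) (sX' : X' * X' = 1) (sY' : Y' * Y' = 1)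
    (cXY : Commute X Y) (cX'Y' : Commute X' Y')
    (cXX' : Commute X X') (cYY' : Commute Y Y')
    (p : Commute (X * Y) (X' * Y')) :
    Y * X' * (Y * X') = X * Y' * (X * Y') ∧
    (X * Y' * (X * Y')) * (X * Y' * (X * Y')) = 1 ∧
    Commute (X * Y' * (X * Y')) X ∧ Commute (X * Y' * (X * Y')) Y ∧
    Commute (X * Y' * (X * Y')) X' ∧ Commute (X * Y' * (X * Y')) Y' := by
  have h5 : Commute X' (Y' * (X * Y')) := cX'Y'.mul_right (cXX'.symm.mul_right cX'Y')
  have hYX'Y' : Y * (X' * Y') = X * (X' * Y' * (X * Y)) := by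
    calc Y * (X' * Y') = (X * X) * (Y * (X' * Y')) := by rw [sX, one_mul]
      _ = X * (X * Y * (X' * Y')) := by group
      _ = X * (X' * Y' * (X * Y)) := by rw [p.eq]
  have e1 : Y * X' * (Y * X') = X * Y' * (X * Y') := by
    calc Y * X' * (Y * X')
        = Y * X' * 1 * (Y * X') := by rw [mul_one]
      _ = Y * X' * (Y' * Y') * (Y * X') := by rw [sY']
      _ = (Y * (X' * Y')) * (Y' * (Y * X')) := by group
      _ = (X * (X' * Y' * (X * Y))) * (Y' * (Y * X')) := by rw [hYX'Y']
      _ = X * X' * Y' * X * ((Y * Y') * (Y * X')) := by group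
      _ = X * X' * Y' * X * ((Y' * Y) * (Y * X')) := by rw [cYY'.eq]
      _ = X * X' * Y' * X * Y' * ((Y * Y) * X') := by group
      _ = X * X' * Y' * X * Y' * (1 * X') := by rw [sY]
      _ = X * (X' * (Y' * (X * Y'))) * X' := by group
      _ = X * ((Y' * (X * Y')) * X') * X' := by rw [h5.eq]
      _ = X * (Y' * (X * Y')) * (X' * X') := by group
      _ = X * (Y' * (X * Y')) * 1 := by rw [sX']
      _ = X * Y' * (X * Y') := by group
  have hrevX : X * (X * Y' * (X * Y')) * X = Y' * X * (Y' * X) := by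
    calc X * (X * Y' * (X * Y')) * X = (X * X) * (Y' * X * (Y' * X)) := by group
      _ = Y' * X * (Y' * X) := by rw [sX, one_mul]
  have hXw : Commute X (Y * X' * (Y * X')) := by
    have h1 : Commute X (Y * X') := cXY.mul_right cXX'
    exact h1.mul_right h1
  have hrev : Y' * X * (Y' * X) = X * Y' * (X * Y') := by
    calc Y' * X * (Y' * X) = X * (X * Y' * (X * Y')) * X := hrevX.symm
      _ = X * (Y * X' * (Y * X')) * X := by rw [e1]
      _ = Y * X' * (Y * X') := cj_eq_of_commute sX hXw
      _ = X * Y' * (X * Y') := e1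
  have hcancel : (X * Y' * (X * Y')) * (Y' * X * (Y' * X)) = 1 := by
    calc (X * Y' * (X * Y')) * (Y' * X * (Y' * X))
        = X * Y' * (X * ((Y' * Y') * (X * (Y' * X)))) := by group
      _ = X * Y' * ((X * X) * (Y' * X)) := by rw [sY']; group
      _ = X * (Y' * Y') * X := by rw [sX]; group
      _ = X * X := by rw [sY']; group
      _ = 1 := sX
  have sqd : (X * Y' * (X * Y')) * (X * Y' * (X * Y')) = 1 := by
    calc (X * Y' * (X * Y')) * (X * Y' * (X * Y'))
        = (X * Y' * (X * Y')) * (Y' * X * (Y' * X)) := by rw [hrev]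
      _ = 1 := hcancel
  have cdX : Commute (X * Y' * (X * Y')) X := by
    refine commute_of_cj sX ?_
    rw [hrevX, hrev]
  have cdY : Commute (X * Y' * (X * Y')) Y := by
    have h1 : Commute Y (X * Y') := cXY.symm.mul_right cYY'
    exact (h1.mul_right h1).symm
  have cdX' : Commute (X * Y' * (X * Y')) X' := by
    have h1 : Commute X' (X * Y') := cXX'.symm.mul_right cX'Y'
    exact (h1.mul_right h1).symm
  have cdY' : Commute (X * Y' * (X * Y')) Y' := by
    refine commute_of_cj sY' ?_
    calc Y' * (X * Y' * (X * Y')) * Y'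
        = Y' * X * (Y' * (X * (Y' * Y'))) := by group
      _ = Y' * X * (Y' * X) := by rw [sY']; group
      _ = X * Y' * (X * Y') := hrev
  exact ⟨e1, sqd, cdX, cdY, cdX', cdY'⟩

structure CoreFacts (X Y Z X' Y' Z' d1 d2 d3 t : Γ) : Prop where
  d1_alt : Y * X' * (Y * X') = d1
  d2_alt : Z * X' * (Z * X') = d2
  d3_alt : Z * Y' * (Z * Y') = d3
  sq1 : d1 * d1 = 1
  sq2 : d2 * d2 = 1
  sq3 : d3 * d3 = 1
  sqt : t * t = 1
  c1X : Commute d1 X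
  c1Y : Commute d1 Y
  c1X' : Commute d1 X'
  c1Y' : Commute d1 Y'
  c2X : Commute d2 X
  c2Z : Commute d2 Z
  c2X' : Commute d2 X'
  c2Z' : Commute d2 Z'
  c3Y : Commute d3 Y
  c3Z : Commute d3 Z
  c3Y' : Commute d3 Y'
  c3Z' : Commute d3 Z'
  j1Z : Z * d1 * Z = d1 * t
  j1Z' : Z' * d1 * Z' = d1 * t
  j2Y : Y * d2 * Y = d2 * t
  j2Y' : Y' * d2 * Y' = d2 * t
  j3X : X * d3 * X = d3 * t
  j3X' : X' * d3 * X' = d3 * t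
  tX : Commute t X
  tY : Commute t Y
  tZ : Commute t Z
  tX' : Commute t X'
  tY' : Commute t Y'
  tZ' : Commute t Z'
  c12 : Commute d1 d2
  c13 : Commute d1 d3
  c23 : Commute d2 d3
  td1 : Commute t d1
  td2 : Commute t d2
  td3 : Commute t d3
  tD : t = d3 * (((X * Y) * Z' * ((X * Y) * Z')) * d2)

lemma core {X Y Z X' Y' Z' : Γ}
    (sX : X * X = 1) (sY : Y * Y = 1) (sZ : Z * Z = 1)
    (sX' : X' * X' = 1) (sY' : Y' * Y' = 1) (sZ' : Z' * Z' = 1)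
    (cXY : Commute X Y) (cXZ : Commute X Z) (cYZ : Commute Y Z)
    (cX'Y' : Commute X' Y') (cX'Z' : Commute X' Z') (cY'Z' : Commute Y' Z')
    (cXX' : Commute X X') (cYY' : Commute Y Y') (cZZ' : Commute Z Z')
    (pXY : Commute (X * Y) (X' * Y')) (pXZ : Commute (X * Z) (X' * Z'))
    (pYZ : Commute (Y * Z) (Y' * Z'))
    (pXYZ : Commute ((X * Y) * Z) ((X' * Y') * Z'))
    {d1 d2 d3 t : Γ}
    (hd1 : d1 = X * Y' * (X * Y')) (hd2 : d2 = X * Z' * (X * Z'))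
    (hd3 : d3 = Y * Z' * (Y * Z')) (ht : t = d1 * (Z * d1 * Z)) :
    CoreFacts X Y Z X' Y' Z' d1 d2 d3 t := by
  obtain ⟨a1, sq1, c1X, c1Y, c1X', c1Y'⟩ :=
    rank2 sX sY sX' sY' cXY cX'Y' cXX' cYY' pXY
  obtain ⟨a2, sq2, c2X, c2Z, c2X', c2Z'⟩ :=
    rank2 sX sZ sX' sZ' cXZ cX'Z' cXX' cZZ' pXZ
  obtain ⟨a3, sq3, c3Y, c3Z, c3Y', c3Z'⟩ :=
    rank2 sY sZ sY' sZ' cYZ cY'Z' cYY' cZZ' pYZ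
  rw [← hd1] at a1 sq1 c1X c1Y c1X' c1Y'
  rw [← hd2] at a2 sq2 c2X c2Z c2X' c2Z'
  rw [← hd3] at a3 sq3 c3Y c3Z c3Y' c3Z'
  have sXY : (X * Y) * (X * Y) = 1 := sq_mul sX sY cXY
  have sXZ : (X * Z) * (X * Z) = 1 := sq_mul sX sZ cXZ
  have sYZ : (Y * Z) * (Y * Z) = 1 := sq_mul sY sZ cYZ
  have sX'Y' : (X' * Y') * (X' * Y') = 1 := sq_mul sX' sY' cX'Y'
  have sX'Z' : (X' * Z') * (X' * Z') = 1 := sq_mul sX' sZ' cX'Z'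
  have sY'Z' : (Y' * Z') * (Y' * Z') = 1 := sq_mul sY' sZ' cY'Z'
  have p5 : Commute ((X * Z) * Y) ((X' * Z') * Y') := by
    have e : (X * Z) * Y = (X * Y) * Z := by rw [mul_assoc, ← cYZ.eq, ← mul_assoc]
    have e' : (X' * Z') * Y' = (X' * Y') * Z' := by rw [mul_assoc, ← cY'Z'.eq, ← mul_assoc]
    rw [e, e']; exact pXYZ
  have p6 : Commute ((Y * Z) * X) ((Y' * Z') * X') := by
    have e : (Y * Z) * X = (X * Y) * Z := by rw [mul_assoc, ← cXZ.eq, ← mul_assoc, ← cXY.eq]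
    have e' : (Y' * Z') * X' = (X' * Y') * Z' := by
      rw [mul_assoc, ← cX'Z'.eq, ← mul_assoc, ← cX'Y'.eq]
    rw [e, e']; exact pXYZ
  obtain ⟨a4, b4, -, -, -, -⟩ :=
    rank2 sXY sZ sX'Y' sZ' (cXZ.mul_left cYZ) (cX'Z'.mul_left cY'Z') pXY cZZ' pXYZ
  obtain ⟨a5, b5, -, -, -, -⟩ :=
    rank2 sXZ sY sX'Z' sY' (cXY.mul_left cYZ.symm) (cX'Y'.mul_left cY'Z'.symm) pXZ cYY' p5
  obtain ⟨a6, b6, -, -, -, -⟩ :=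
    rank2 sYZ sX sY'Z' sX' (cXY.symm.mul_left cXZ.symm) (cX'Y'.symm.mul_left cX'Z'.symm)
      pYZ cXX' p6
  obtain ⟨ζ, hζ⟩ : ∃ z, z = (X * Y) * Z' * ((X * Y) * Z') := ⟨_, rfl⟩
  obtain ⟨η, hη⟩ : ∃ z, z = (X * Z) * Y' * ((X * Z) * Y') := ⟨_, rfl⟩
  obtain ⟨θ, hθ⟩ : ∃ z, z = (Y * Z) * X' * ((Y * Z) * X') := ⟨_, rfl⟩
  obtain ⟨k1, hk1⟩ : ∃ z, z = Z * d1 * Z := ⟨_, rfl⟩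
  obtain ⟨k2, hk2⟩ : ∃ z, z = Y * d2 * Y := ⟨_, rfl⟩
  obtain ⟨k3, hk3⟩ : ∃ z, z = X * d3 * X := ⟨_, rfl⟩
  rw [← hζ] at a4 b4
  rw [← hη] at a5 b5
  rw [← hθ] at a6 b6
  rw [← hk1] at ht
  have sqk1 : k1 * k1 = 1 := by rw [hk1]; exact sq_cj sq1 sZ
  have sqk2 : k2 * k2 = 1 := by rw [hk2]; exact sq_cj sq2 sY
  have sqk3 : k3 * k3 = 1 := by rw [hk3]; exact sq_cj sq3 sX
  -- word expansions
  have W1 : k3 * d2 = ζ := by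
    rw [hk3, hd3, hd2, hζ]
    calc X * (Y * Z' * (Y * Z')) * X * (X * Z' * (X * Z'))
        = X * Y * Z' * Y * (Z' * ((X * X) * Z')) * (X * Z') := by group
      _ = X * Y * Z' * Y * (Z' * Z') * (X * Z') := by rw [sX]; group
      _ = X * Y * Z' * (Y * X) * Z' := by rw [sZ']; group
      _ = X * Y * Z' * (X * Y) * Z' := by rw [← cXY.eq]
      _ = (X * Y) * Z' * ((X * Y) * Z') := by group
  have W2 : k2 * d3 = ζ := by
    rw [hk2, hd3, hd2, hζ]
    calc Y * (X * Z' * (X * Z')) * Y * (Y * Z' * (Y * Z'))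
        = Y * X * Z' * X * (Z' * ((Y * Y) * Z')) * (Y * Z') := by group
      _ = Y * X * Z' * X * (Z' * Z') * (Y * Z') := by rw [sY]; group
      _ = (Y * X) * Z' * ((X * Y) * Z') := by rw [sZ']; group
      _ = (X * Y) * Z' * ((X * Y) * Z') := by rw [cXY.eq]
  have W3 : d2 * (X' * d3 * X') = ζ := by
    rw [← a2, ← a3, ← a4]
    calc (Z * X' * (Z * X')) * (X' * (Z * Y' * (Z * Y')) * X')
        = Z * X' * ((Z * ((X' * X') * Z)) * (Y' * (Z * (Y' * X')))) := by group
      _ = Z * X' * ((Z * Z) * (Y' * (Z * (Y' * X')))) := by rw [sX']; group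
      _ = Z * X' * (Y' * (Z * (Y' * X'))) := by rw [sZ]; group
      _ = Z * X' * (Y' * (Z * (X' * Y'))) := by rw [← cX'Y'.eq]
      _ = Z * (X' * Y') * (Z * (X' * Y')) := by group
  have W4 : k3 * d1 = η := by
    rw [hk3, ← a3, hd1, hη]
    calc X * (Z * Y' * (Z * Y')) * X * (X * Y' * (X * Y'))
        = X * Z * Y' * Z * (Y' * ((X * X) * Y')) * (X * Y') := by group
      _ = X * Z * Y' * Z * (Y' * Y') * (X * Y') := by rw [sX]; group
      _ = X * Z * Y' * (Z * X) * Y' := by rw [sY']; group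
      _ = X * Z * Y' * (X * Z) * Y' := by rw [← cXZ.eq]
      _ = (X * Z) * Y' * ((X * Z) * Y') := by group
  have W5 : k1 * d3 = η := by
    rw [hk1, ← a3, hd1, hη]
    calc Z * (X * Y' * (X * Y')) * Z * (Z * Y' * (Z * Y'))
        = Z * X * Y' * X * (Y' * ((Z * Z) * Y')) * (Z * Y') := by group
      _ = Z * X * Y' * X * (Y' * Y') * (Z * Y') := by rw [sZ]; group
      _ = (Z * X) * Y' * ((X * Z) * Y') := by rw [sY']; group
      _ = (X * Z) * Y' * ((X * Z) * Y') := by rw [cXZ.eq]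
  have W7 : d3 * (Z' * d1 * Z') = η := by
    rw [← a1, hd3, ← a5]
    calc (Y * Z' * (Y * Z')) * (Z' * (Y * X' * (Y * X')) * Z')
        = Y * Z' * (Y * ((Z' * Z') * Y)) * (X' * (Y * (X' * Z'))) := by group
      _ = Y * Z' * (Y * Y) * (X' * (Y * (X' * Z'))) := by rw [sZ']; group
      _ = Y * (Z' * X') * (Y * (X' * Z')) := by rw [sY]; group
      _ = Y * (X' * Z') * (Y * (X' * Z')) := by rw [← cX'Z'.eq]
  have W8 : k2 * d1 = θ := by
    rw [hk2, ← a1, ← a2, hθ]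
    calc Y * (Z * X' * (Z * X')) * Y * (Y * X' * (Y * X'))
        = Y * Z * X' * Z * (X' * ((Y * Y) * X')) * (Y * X') := by group
      _ = Y * Z * X' * Z * (X' * X') * (Y * X') := by rw [sY]; group
      _ = Y * Z * X' * (Z * Y) * X' := by rw [sX']; group
      _ = Y * Z * X' * (Y * Z) * X' := by rw [← cYZ.eq]
      _ = (Y * Z) * X' * ((Y * Z) * X') := by group
  have W9 : k1 * d2 = θ := by
    rw [hk1, ← a1, ← a2, hθ]
    calc Z * (Y * X' * (Y * X')) * Z * (Z * X' * (Z * X'))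
        = Z * Y * X' * Y * (X' * ((Z * Z) * X')) * (Z * X') := by group
      _ = Z * Y * X' * Y * (X' * X') * (Z * X') := by rw [sZ]; group
      _ = (Z * Y) * X' * ((Y * Z) * X') := by rw [sX']; group
      _ = (Y * Z) * X' * ((Y * Z) * X') := by rw [cYZ.eq]
  have W10 : d1 * (Y' * d2 * Y') = θ := by
    rw [hd1, hd2, ← a6]
    calc (X * Y' * (X * Y')) * (Y' * (X * Z' * (X * Z')) * Y')
        = X * Y' * (X * ((Y' * Y') * X)) * (Z' * (X * (Z' * Y'))) := by group
      _ = X * Y' * (X * X) * (Z' * (X * (Z' * Y'))) := by rw [sY']; group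
      _ = X * (Y' * Z') * (X * (Z' * Y')) := by rw [sX]; group
      _ = X * (Y' * Z') * (X * (Y' * Z')) := by rw [← cY'Z'.eq]
  -- squared commutes
  have A1 : Commute k3 d2 := commute_of_sq_mul sqk3 sq2 (by rw [W1]; exact b4)
  have A2 : Commute k3 d1 := commute_of_sq_mul sqk3 sq1 (by rw [W4]; exact b5)
  have A3 : Commute k2 d1 := commute_of_sq_mul sqk2 sq1 (by rw [W8]; exact b6)
  have A3' : Commute k1 d2 := commute_of_sq_mul sqk1 sq2 (by rw [W9]; exact b6)
  have A3'' : Commute k1 d3 := commute_of_sq_mul sqk1 sq3 (by rw [W5]; exact b5)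
  have A3''' : Commute k2 d3 := commute_of_sq_mul sqk2 sq3 (by rw [W2]; exact b4)
  -- primed conjugates agree
  have A4 : X' * d3 * X' = k3 := by
    have h' : d2 * k3 = ζ := by rw [← A1.eq]; exact W1
    exact mul_left_cancel (W3.trans h'.symm)
  have A5 : Z' * d1 * Z' = k1 := by
    have h' : d3 * k1 = η := by rw [← A3''.eq]; exact W5
    exact mul_left_cancel (W7.trans h'.symm)
  have A6 : Y' * d2 * Y' = k2 := by
    have h' : d1 * k2 = θ := by rw [← A3.eq]; exact W8
    exact mul_left_cancel (W10.trans h'.symm)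
  -- d-d commutes
  have c23 : Commute d2 d3 :=
    commute_unconj sX c2X.symm (by rw [← hk3]; exact A1.symm)
  have c13 : Commute d1 d3 :=
    commute_unconj sX c1X.symm (by rw [← hk3]; exact A2.symm)
  have c12 : Commute d1 d2 :=
    commute_unconj sY c1Y.symm (by rw [← hk2]; exact A3.symm)
  -- the element t
  have A10 : k1 = k2 * d1 * d2 := by
    calc k1 = k1 * (d2 * d2) := by rw [sq2, mul_one]
      _ = (k1 * d2) * d2 := by group
      _ = (k2 * d1) * d2 := by rw [W9, ← W8]
      _ = k2 * d1 * d2 := by group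
  have A11 : t = k2 * d2 := by
    calc t = d1 * k1 := ht
      _ = d1 * (k2 * d1 * d2) := by rw [A10]
      _ = (d1 * k2) * (d1 * d2) := by group
      _ = (k2 * d1) * (d1 * d2) := by rw [← A3.eq]
      _ = k2 * ((d1 * d1) * d2) := by group
      _ = k2 * d2 := by rw [sq1]; group
  have A12 : t = k3 * d3 := by
    have hk1' : k1 = k3 * d1 * d3 := by
      calc k1 = k1 * (d3 * d3) := by rw [sq3, mul_one]
        _ = (k1 * d3) * d3 := by group
        _ = (k3 * d1) * d3 := by rw [W5, ← W4]
        _ = k3 * d1 * d3 := by group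
    calc t = d1 * k1 := ht
      _ = d1 * (k3 * d1 * d3) := by rw [hk1']
      _ = (d1 * k3) * (d1 * d3) := by group
      _ = (k3 * d1) * (d1 * d3) := by rw [← A2.eq]
      _ = k3 * ((d1 * d1) * d3) := by group
      _ = k3 * d3 := by rw [sq1]; group
  have A13 : d2 * k2 = t := by
    have hk2' : k2 = k3 * d2 * d3 := by
      calc k2 = k2 * (d3 * d3) := by rw [sq3, mul_one]
        _ = (k2 * d3) * d3 := by group
        _ = (k3 * d2) * d3 := by rw [W2, ← W1]
        _ = k3 * d2 * d3 := by group
    calc d2 * k2 = d2 * (k3 * d2 * d3) := by rw [hk2']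
      _ = (d2 * k3) * (d2 * d3) := by group
      _ = (k3 * d2) * (d2 * d3) := by rw [← A1.eq]
      _ = k3 * ((d2 * d2) * d3) := by group
      _ = k3 * d3 := by rw [sq2]; group
      _ = t := A12.symm
  have cd2k2 : Commute d2 k2 := by
    have : d2 * k2 = k2 * d2 := A13.trans A11
    exact this
  have A14 : d3 * k3 = t := by
    have hk3' : k3 = k2 * d3 * d2 := by
      calc k3 = k3 * (d2 * d2) := by rw [sq2, mul_one]
        _ = (k3 * d2) * d2 := by group
        _ = (k2 * d3) * d2 := by rw [W1, ← W2]
        _ = k2 * d3 * d2 := by group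
    calc d3 * k3 = d3 * (k2 * d3 * d2) := by rw [hk3']
      _ = (d3 * k2) * (d3 * d2) := by group
      _ = (k2 * d3) * (d3 * d2) := by rw [← A3'''.eq]
      _ = k2 * ((d3 * d3) * d2) := by group
      _ = k2 * d2 := by rw [sq3]; group
      _ = t := A11.symm
  have cd3k3 : Commute d3 k3 := by
    have : d3 * k3 = k3 * d3 := A14.trans A12
    exact this
  have A15 : k1 * d1 = t := by
    calc k1 * d1 = (k2 * d1 * d2) * d1 := by rw [A10]
      _ = (k2 * d1) * (d2 * d1) := by group
      _ = (k2 * d1) * (d1 * d2) := by rw [c12.eq]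
      _ = k2 * ((d1 * d1) * d2) := by group
      _ = k2 * d2 := by rw [sq1]; group
      _ = t := A11.symm
  have cd1k1 : Commute d1 k1 := by
    have : d1 * k1 = k1 * d1 := ht.symm.trans A15.symm
    exact this
  have sqt : t * t = 1 := by rw [ht]; exact sq_mul sq1 sqk1 cd1k1
  -- centrality of t
  have tX : Commute t X := central_step sX hk3.symm A12 A14
  have tX' : Commute t X' := central_step sX' A4 A12 A14
  have tY : Commute t Y := central_step sY hk2.symm A11 A13
  have tY' : Commute t Y' := central_step sY' A6 A11 A13
  have tZ : Commute t Z := central_step sZ hk1.symm A15.symm ht.symm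
  have tZ' : Commute t Z' := central_step sZ' A5 A15.symm ht.symm
  -- conjugation values
  have jj1 : d1 * t = k1 := by
    rw [ht]
    calc d1 * (d1 * k1) = (d1 * d1) * k1 := by group
      _ = k1 := by rw [sq1]; group
  have jj2 : d2 * t = k2 := by
    rw [← A13]
    calc d2 * (d2 * k2) = (d2 * d2) * k2 := by group
      _ = k2 := by rw [sq2]; group
  have jj3 : d3 * t = k3 := by
    rw [← A14]
    calc d3 * (d3 * k3) = (d3 * d3) * k3 := by group
      _ = k3 := by rw [sq3]; group
  have td1 : Commute t d1 := by
    have : Commute d1 (d1 * k1) := (Commute.refl d1).mul_right cd1k1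
    rw [← ht] at this; exact this.symm
  have td2 : Commute t d2 := by
    have : Commute d2 (d2 * k2) := (Commute.refl d2).mul_right cd2k2
    rw [A13] at this; exact this.symm
  have td3 : Commute t d3 := by
    have : Commute d3 (d3 * k3) := (Commute.refl d3).mul_right cd3k3
    rw [A14] at this; exact this.symm
  have tD : t = d3 * (((X * Y) * Z' * ((X * Y) * Z')) * d2) := by
    rw [← hζ]
    have hζd2 : ζ * d2 = k3 := by
      rw [← W1]
      calc (k3 * d2) * d2 = k3 * (d2 * d2) := by group
        _ = k3 := by rw [sq2]; group
    rw [hζd2]; exact A14.symm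
  exact ⟨a1, a2, a3, sq1, sq2, sq3, sqt, c1X, c1Y, c1X', c1Y', c2X, c2Z, c2X', c2Z',
    c3Y, c3Z, c3Y', c3Z',
    hk1.symm.trans jj1.symm, A5.trans jj1.symm,
    hk2.symm.trans jj2.symm, A6.trans jj2.symm,
    hk3.symm.trans jj3.symm, A4.trans jj3.symm,
    tX, tY, tZ, tX', tY', tZ', c12, c13, c23, td1, td2, td3, tD⟩


end Word

-- ===== concrete model elements =====
def dK1 : Equiv.Perm (Fin 32) := pX * pYp * (pX * pYp)
def dK2 : Equiv.Perm (Fin 32) := pX * pZp * (pX * pZp)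
def dK3 : Equiv.Perm (Fin 32) := pY * pZp * (pY * pZp)
def tK : Equiv.Perm (Fin 32) := dK1 * (pZ * dK1 * pZ)

lemma tK_ne_one : tK ≠ 1 := by decide

lemma hKinj : Function.Injective (fun v : M2 × M2 × M2 × M2 =>
    dK1 ^ (Multiplicative.toAdd v.1).val * (dK2 ^ (Multiplicative.toAdd v.2.1).val *
      (dK3 ^ (Multiplicative.toAdd v.2.2.1).val * tK ^ (Multiplicative.toAdd v.2.2.2).val))) := by
  decide

lemma jhelp {Γ : Type*} [Group Γ] {x g tt : Γ} (hx : x * x = 1) (hj : g * x * g = x * tt) :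
    x * g * (x * g) = tt := by
  calc x * g * (x * g) = x * (g * x * g) := by group
    _ = x * (x * tt) := by rw [hj]
    _ = (x * x) * tt := by group
    _ = tt := by rw [hx, one_mul]


/-- **Remark.** Let `G = ⟨a, b, c⟩` be an elementary abelian `2`-group of rank `3`.
Then `χ(G)` is nilpotent of class exactly `3`,
`D(G) = ⟨[a,b^φ], [a,c^φ], [b,c^φ], [a,b^φ,c]⟩ ≅ (ℤ/2)⁴` (elementary abelian of
order `16`), and `[D(G), G] = ⟨[a,b^φ,c]⟩` has order `2`.  In particular, `D(G)` is
not powerfully embedded in `χ(G)` for `p = 2`: `[D(G), χ(G)] ≰ D(G)^4`. -/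
theorem chi_elementary_abelian_rank_three (G : Type*) [Group G]
    (h2 : ∀ g : G, g * g = 1) (a b c : G)
    (hbasis : Subgroup.closure {a, b, c} = ⊤) (hcard : Nat.card G = 8) :
    ((⊤ : Subgroup (chi G)).lowerCentralSeries 3 = ⊥ ∧ (⊤ : Subgroup (chi G)).lowerCentralSeries 2 ≠ ⊥) ∧
    (DSubgroup G = Subgroup.closure
        {comm' (chiIota G a) (chiIotaPhi G b), comm' (chiIota G a) (chiIotaPhi G c),
          comm' (chiIota G b) (chiIotaPhi G c),
          comm' (comm' (chiIota G a) (chiIotaPhi G b)) (chiIota G c)} ∧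
      Nat.card (DSubgroup G) = 16 ∧ ∀ x ∈ DSubgroup G, x * x = 1) ∧
    (⁅DSubgroup G, (chiIota G).range⁆ =
        Subgroup.closure {comm' (comm' (chiIota G a) (chiIotaPhi G b)) (chiIota G c)} ∧
      Nat.card ↥(⁅DSubgroup G, (chiIota G).range⁆ : Subgroup (chi G)) = 2) ∧
    ¬ ⁅DSubgroup G, (⊤ : Subgroup (chi G))⁆ ≤ spow (DSubgroup G) 4 := by
  classical
  obtain ⟨ψ, hψA, hψB, hψC, hψA', hψB', hψC'⟩ := model h2 a b c hbasis hcard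
  have hGcomm : ∀ g h : G, Commute g h := by
    intro g h
    show g * h = h * g
    calc g * h = (g * h)⁻¹ := (inv_of_sq (h2 _)).symm
      _ = h⁻¹ * g⁻¹ := mul_inv_rev _ _
      _ = h * g := by rw [inv_of_sq (h2 h), inv_of_sq (h2 g)]
  have hrel : ∀ g : G, Commute (chiIota G g) (chiIotaPhi G g) := by
    intro g
    rw [← comm'_eq_one_iff]
    have hmem : comm' (inl g) (inr g) ∈ Subgroup.normalClosure (chiRels G) :=
      Subgroup.subset_normalClosure ⟨g, rfl⟩
    have h1 : chiMk G (comm' (inl g) (inr g)) = 1 := (QuotientGroup.eq_one_iff _).mpr hmem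
    rw [map_comm'] at h1
    exact h1
  obtain ⟨A, hA⟩ : ∃ x, x = chiIota G a := ⟨_, rfl⟩
  obtain ⟨B, hB⟩ : ∃ x, x = chiIota G b := ⟨_, rfl⟩
  obtain ⟨C, hC⟩ : ∃ x, x = chiIota G c := ⟨_, rfl⟩
  obtain ⟨A', hA'⟩ : ∃ x, x = chiIotaPhi G a := ⟨_, rfl⟩
  obtain ⟨B', hB'⟩ : ∃ x, x = chiIotaPhi G b := ⟨_, rfl⟩
  obtain ⟨C', hC'⟩ : ∃ x, x = chiIotaPhi G c := ⟨_, rfl⟩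
  have sA : A * A = 1 := by rw [hA, ← map_mul, h2, map_one]
  have sB : B * B = 1 := by rw [hB, ← map_mul, h2, map_one]
  have sC : C * C = 1 := by rw [hC, ← map_mul, h2, map_one]
  have sA' : A' * A' = 1 := by rw [hA', ← map_mul, h2, map_one]
  have sB' : B' * B' = 1 := by rw [hB', ← map_mul, h2, map_one]
  have sC' : C' * C' = 1 := by rw [hC', ← map_mul, h2, map_one]
  have cAB : Commute A B := by rw [hA, hB]; exact (hGcomm a b).map _
  have cAC : Commute A C := by rw [hA, hC]; exact (hGcomm a c).map _
  have cBC : Commute B C := by rw [hB, hC]; exact (hGcomm b c).map _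
  have cA'B' : Commute A' B' := by rw [hA', hB']; exact (hGcomm a b).map _
  have cA'C' : Commute A' C' := by rw [hA', hC']; exact (hGcomm a c).map _
  have cB'C' : Commute B' C' := by rw [hB', hC']; exact (hGcomm b c).map _
  have cAA' : Commute A A' := by rw [hA, hA']; exact hrel a
  have cBB' : Commute B B' := by rw [hB, hB']; exact hrel b
  have cCC' : Commute C C' := by rw [hC, hC']; exact hrel c
  have pAB : Commute (A * B) (A' * B') := by
    have h := hrel (a * b)
    simp only [map_mul] at h
    rwa [← hA, ← hB, ← hA', ← hB'] at h
  have pAC : Commute (A * C) (A' * C') := by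
    have h := hrel (a * c)
    simp only [map_mul] at h
    rwa [← hA, ← hC, ← hA', ← hC'] at h
  have pBC : Commute (B * C) (B' * C') := by
    have h := hrel (b * c)
    simp only [map_mul] at h
    rwa [← hB, ← hC, ← hB', ← hC'] at h
  have pABC : Commute ((A * B) * C) ((A' * B') * C') := by
    have h := hrel (a * b * c)
    simp only [map_mul] at h
    rwa [← hA, ← hB, ← hC, ← hA', ← hB', ← hC'] at h
  obtain ⟨d1, hd1⟩ : ∃ x, x = A * B' * (A * B') := ⟨_, rfl⟩
  obtain ⟨d2, hd2⟩ : ∃ x, x = A * C' * (A * C') := ⟨_, rfl⟩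
  obtain ⟨d3, hd3⟩ : ∃ x, x = B * C' * (B * C') := ⟨_, rfl⟩
  obtain ⟨t, hTw⟩ : ∃ x, x = d1 * (C * d1 * C) := ⟨_, rfl⟩
  have F : CoreFacts A B C A' B' C' d1 d2 d3 t :=
    core sA sB sC sA' sB' sC' cAB cAC cBC cA'B' cA'C' cB'C' cAA' cBB' cCC'
      pAB pAC pBC pABC hd1 hd2 hd3 hTw
  -- ψ values
  have hψd1 : ψ d1 = dK1 := by
    rw [hd1, hA, hB']; simp only [map_mul, hψA, hψB']; rfl
  have hψd2 : ψ d2 = dK2 := by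
    rw [hd2, hA, hC']; simp only [map_mul, hψA, hψC']; rfl
  have hψd3 : ψ d3 = dK3 := by
    rw [hd3, hB, hC']; simp only [map_mul, hψB, hψC']; rfl
  have hψt : ψ t = tK := by
    rw [hTw, hC]; simp only [map_mul, hψd1, hψC]; rfl
  have htne1 : t ≠ 1 := by
    intro h
    apply tK_ne_one
    rw [← hψt, h, map_one]
  -- rewrite the goal in terms of d1 d2 d3 t
  rw [← hA, ← hB, ← hC, ← hB', ← hC']
  have hc1 : comm' A B' = d1 := (comm'_of_sq sA sB').trans hd1.symm
  have hc2 : comm' A C' = d2 := (comm'_of_sq sA sC').trans hd2.symm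
  have hc3 : comm' B C' = d3 := (comm'_of_sq sB sC').trans hd3.symm
  rw [hc1, hc2, hc3]
  have hct : comm' d1 C = t := by
    rw [comm'_of_sq F.sq1 sC, hTw]; group
  rw [hct]
  -- generation of chi G
  have hranges : ((chiMk G).comp inl).range ⊔ ((chiMk G).comp inr).range = ⊤ := by
    rw [← Coprod.range_eq (chiMk G)]
    exact MonoidHom.range_eq_top.mpr (QuotientGroup.mk'_surjective _)
  have hι : (chiIota G).range = Subgroup.closure {A, B, C} := by
    rw [hA, hB, hC, MonoidHom.range_eq_map, ← hbasis, MonoidHom.map_closure]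
    congr 1
    simp only [Set.image_insert_eq, Set.image_singleton]
  have hι' : (chiIotaPhi G).range = Subgroup.closure {A', B', C'} := by
    rw [hA', hB', hC', MonoidHom.range_eq_map, ← hbasis, MonoidHom.map_closure]
    congr 1
    simp only [Set.image_insert_eq, Set.image_singleton]
  have hGen : Subgroup.closure ({A, B, C, A', B', C'} : Set (chi G)) = ⊤ := by
    have hsets : ({A, B, C, A', B', C'} : Set (chi G)) = {A, B, C} ∪ {A', B', C'} := by
      ext x
      simp only [Set.mem_insert_iff, Set.mem_union, Set.mem_singleton_iff]
      tauto
    rw [hsets, Subgroup.closure_union, ← hι, ← hι']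
    exact hranges
  have hmem6 : ∀ x : chi G, x ∈ Subgroup.closure ({A, B, C, A', B', C'} : Set (chi G)) := by
    intro x
    rw [hGen]
    exact Subgroup.mem_top x
  have hsq6 : ∀ s ∈ ({A, B, C, A', B', C'} : Set (chi G)), s * s = 1 := by
    intro s hs
    simp only [Set.mem_insert_iff, Set.mem_singleton_iff] at hs
    rcases hs with rfl | rfl | rfl | rfl | rfl | rfl
    exacts [sA, sB, sC, sA', sB', sC']
  -- the subgroup E
  set E := Subgroup.closure ({d1, d2, d3, t} : Set (chi G)) with hEdef
  set T := Subgroup.closure ({t} : Set (chi G)) with hTdef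
  have hd1E : d1 ∈ E := Subgroup.subset_closure (by simp)
  have hd2E : d2 ∈ E := Subgroup.subset_closure (by simp)
  have hd3E : d3 ∈ E := Subgroup.subset_closure (by simp)
  have htE : t ∈ E := Subgroup.subset_closure (by simp)
  have hstabBase : ∀ s ∈ ({A, B, C, A', B', C'} : Set (chi G)),
      ∀ x ∈ ({d1, d2, d3, t} : Set (chi G)), s * x * s⁻¹ ∈ E := by
    intro s hs x hx
    simp only [Set.mem_insert_iff, Set.mem_singleton_iff] at hs hx
    rcases hs with rfl | rfl | rfl | rfl | rfl | rfl <;> rcases hx with rfl | rfl | rfl | rfl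
    exacts [
      (by rw [conj_eq_of_commute F.c1X.symm]; exact hd1E),
      (by rw [conj_eq_of_commute F.c2X.symm]; exact hd2E),
      (by rw [inv_of_sq sA, F.j3X]; exact mul_mem hd3E htE),
      (by rw [conj_eq_of_commute F.tX.symm]; exact htE),
      (by rw [conj_eq_of_commute F.c1Y.symm]; exact hd1E),
      (by rw [inv_of_sq sB, F.j2Y]; exact mul_mem hd2E htE),
      (by rw [conj_eq_of_commute F.c3Y.symm]; exact hd3E),
      (by rw [conj_eq_of_commute F.tY.symm]; exact htE),
      (by rw [inv_of_sq sC, F.j1Z]; exact mul_mem hd1E htE),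
      (by rw [conj_eq_of_commute F.c2Z.symm]; exact hd2E),
      (by rw [conj_eq_of_commute F.c3Z.symm]; exact hd3E),
      (by rw [conj_eq_of_commute F.tZ.symm]; exact htE),
      (by rw [conj_eq_of_commute F.c1X'.symm]; exact hd1E),
      (by rw [conj_eq_of_commute F.c2X'.symm]; exact hd2E),
      (by rw [inv_of_sq sA', F.j3X']; exact mul_mem hd3E htE),
      (by rw [conj_eq_of_commute F.tX'.symm]; exact htE),
      (by rw [conj_eq_of_commute F.c1Y'.symm]; exact hd1E),
      (by rw [inv_of_sq sB', F.j2Y']; exact mul_mem hd2E htE),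
      (by rw [conj_eq_of_commute F.c3Y'.symm]; exact hd3E),
      (by rw [conj_eq_of_commute F.tY'.symm]; exact htE),
      (by rw [inv_of_sq sC', F.j1Z']; exact mul_mem hd1E htE),
      (by rw [conj_eq_of_commute F.c2Z'.symm]; exact hd2E),
      (by rw [conj_eq_of_commute F.c3Z'.symm]; exact hd3E),
      (by rw [conj_eq_of_commute F.tZ'.symm]; exact htE)]
  have hstab : ∀ s ∈ ({A, B, C, A', B', C'} : Set (chi G)), ∀ e ∈ E, s * e * s⁻¹ ∈ E :=
    fun s hs => conj_closure_stable (hstabBase s hs)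
  have hEnormal : E.Normal := by
    rw [← Subgroup.normalizer_eq_top_iff, eq_top_iff, ← hGen]
    refine (Subgroup.closure_le _).mpr ?_
    intro s hs
    have hss : s * s = 1 := hsq6 s hs
    rw [SetLike.mem_coe, Subgroup.mem_normalizer_iff]
    intro h
    constructor
    · exact fun hh => hstab s hs h hh
    · intro hh
      have h3 := hstab s hs _ hh
      have he : s * (s * h * s⁻¹) * s⁻¹ = h := by
        rw [inv_of_sq hss]
        calc s * (s * h * s) * s = (s * s) * h * (s * s) := by group
          _ = h := by rw [hss]; group
      rwa [he] at h3
  haveI := hEnormal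
  -- chi G / E is abelian
  have hbAB' : ⁅A, B'⁆ = d1 := (brk_eq sA sB').trans hd1.symm
  have hbBA' : ⁅B, A'⁆ = d1 := (brk_eq sB sA').trans F.d1_alt
  have hbAC' : ⁅A, C'⁆ = d2 := (brk_eq sA sC').trans hd2.symm
  have hbCA' : ⁅C, A'⁆ = d2 := (brk_eq sC sA').trans F.d2_alt
  have hbBC' : ⁅B, C'⁆ = d3 := (brk_eq sB sC').trans hd3.symm
  have hbCB' : ⁅C, B'⁆ = d3 := (brk_eq sC sB').trans F.d3_alt
  have habel : ∀ x y : chi G, Commute ((QuotientGroup.mk' E) x) ((QuotientGroup.mk' E) y) := by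
    have m1 : Commute ((QuotientGroup.mk' E) A) ((QuotientGroup.mk' E) B') :=
      (comm_mem_iff E _ _).mp (by rw [hbAB']; exact hd1E)
    have m2 : Commute ((QuotientGroup.mk' E) A) ((QuotientGroup.mk' E) C') :=
      (comm_mem_iff E _ _).mp (by rw [hbAC']; exact hd2E)
    have m3 : Commute ((QuotientGroup.mk' E) B) ((QuotientGroup.mk' E) A') :=
      (comm_mem_iff E _ _).mp (by rw [hbBA']; exact hd1E)
    have m4 : Commute ((QuotientGroup.mk' E) B) ((QuotientGroup.mk' E) C') :=
      (comm_mem_iff E _ _).mp (by rw [hbBC']; exact hd3E)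
    have m5 : Commute ((QuotientGroup.mk' E) C) ((QuotientGroup.mk' E) A') :=
      (comm_mem_iff E _ _).mp (by rw [hbCA']; exact hd2E)
    have m6 : Commute ((QuotientGroup.mk' E) C) ((QuotientGroup.mk' E) B') :=
      (comm_mem_iff E _ _).mp (by rw [hbCB']; exact hd3E)
    have key : ∀ s ∈ ({A, B, C, A', B', C'} : Set (chi G)),
        ∀ u ∈ ({A, B, C, A', B', C'} : Set (chi G)),
        Commute ((QuotientGroup.mk' E) s) ((QuotientGroup.mk' E) u) := by
      intro s hs u hu
      simp only [Set.mem_insert_iff, Set.mem_singleton_iff] at hs hu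
      rcases hs with rfl | rfl | rfl | rfl | rfl | rfl <;>
        rcases hu with rfl | rfl | rfl | rfl | rfl | rfl
      exacts [Commute.refl _, cAB.map _, cAC.map _, cAA'.map _, m1, m2,
        (cAB.map _).symm, Commute.refl _, cBC.map _, m3, cBB'.map _, m4,
        (cAC.map _).symm, (cBC.map _).symm, Commute.refl _, m5, m6, cCC'.map _,
        (cAA'.map _).symm, m3.symm, m5.symm, Commute.refl _, cA'B'.map _, cA'C'.map _,
        m1.symm, (cBB'.map _).symm, m6.symm, (cA'B'.map _).symm, Commute.refl _, cB'C'.map _,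
        m2.symm, m4.symm, (cCC'.map _).symm, (cA'C'.map _).symm, (cB'C'.map _).symm,
        Commute.refl _]
    intro x y
    induction hmem6 x, hmem6 y using Subgroup.closure_induction₂ with
    | mem x y hx hy => exact key x hx y hy
    | one_left x hx => simp only [map_one]; exact Commute.one_left _
    | one_right x hx => simp only [map_one]; exact Commute.one_right _
    | mul_left x y z hx hy hz h1 h3 => simp only [map_mul]; exact h1.mul_left h3
    | mul_right y z x hy hz hx h1 h3 => simp only [map_mul]; exact h1.mul_right h3
    | inv_left x y hx hy h => simp only [map_inv]; exact h.inv_left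
    | inv_right x y hx hy h => simp only [map_inv]; exact h.inv_right
  have habelE : ∀ x y : chi G, ⁅x, y⁆ ∈ E := fun x y => (comm_mem_iff E x y).mpr (habel x y)
  -- t is central
  have htcent : ∀ x : chi G, Commute x t := by
    intro x
    induction hmem6 x using Subgroup.closure_induction with
    | mem s hs =>
        simp only [Set.mem_insert_iff, Set.mem_singleton_iff] at hs
        rcases hs with rfl | rfl | rfl | rfl | rfl | rfl
        exacts [F.tX.symm, F.tY.symm, F.tZ.symm, F.tX'.symm, F.tY'.symm, F.tZ'.symm]
    | one => exact Commute.one_left t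
    | mul x y hx hy ihx ihy => exact ihx.mul_left ihy
    | inv x hx ih => exact ih.inv_left
  have hTcenter : T ≤ Subgroup.center (chi G) := by
    refine (Subgroup.closure_le _).mpr ?_
    intro x hx
    rw [Set.mem_singleton_iff] at hx
    subst hx
    rw [SetLike.mem_coe]
    exact Subgroup.mem_center_iff.mpr fun g => (htcent g).eq
  have hTnormal : T.Normal := by
    constructor
    intro n hn g
    have hcn : Commute g n := Subgroup.mem_center_iff.mp (hTcenter hn) g
    rw [conj_eq_of_commute hcn]
    exact hn
  haveI := hTnormal
  -- brackets with value t
  have hb1C : ⁅d1, C⁆ = t := (brk_eq F.sq1 sC).trans (jhelp F.sq1 F.j1Z)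
  have hb1C' : ⁅d1, C'⁆ = t := (brk_eq F.sq1 sC').trans (jhelp F.sq1 F.j1Z')
  have hb2B : ⁅d2, B⁆ = t := (brk_eq F.sq2 sB).trans (jhelp F.sq2 F.j2Y)
  have hb2B' : ⁅d2, B'⁆ = t := (brk_eq F.sq2 sB').trans (jhelp F.sq2 F.j2Y')
  have hb3A : ⁅d3, A⁆ = t := (brk_eq F.sq3 sA).trans (jhelp F.sq3 F.j3X)
  have hb3A' : ⁅d3, A'⁆ = t := (brk_eq F.sq3 sA').trans (jhelp F.sq3 F.j3X')
  have htT : t ∈ T := Subgroup.subset_closure rfl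
  -- E is central modulo T
  have hcmemT : ∀ {u v : chi G}, Commute u v → ⁅u, v⁆ ∈ T := by
    intro u v h
    rw [commutatorElement_eq_one_iff_commute.mpr h]
    exact one_mem _
  have hcentbase : ∀ g ∈ ({d1, d2, d3, t} : Set (chi G)),
      ∀ s ∈ ({A, B, C, A', B', C'} : Set (chi G)), ⁅g, s⁆ ∈ T := by
    intro g hg s hs
    simp only [Set.mem_insert_iff, Set.mem_singleton_iff] at hg hs
    rcases hg with rfl | rfl | rfl | rfl <;> rcases hs with rfl | rfl | rfl | rfl | rfl | rfl
    exacts [hcmemT F.c1X, hcmemT F.c1Y, (by rw [hb1C]; exact htT), hcmemT F.c1X',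
      hcmemT F.c1Y', (by rw [hb1C']; exact htT),
      hcmemT F.c2X, (by rw [hb2B]; exact htT), hcmemT F.c2Z, hcmemT F.c2X',
      (by rw [hb2B']; exact htT), hcmemT F.c2Z',
      (by rw [hb3A]; exact htT), hcmemT F.c3Y, hcmemT F.c3Z, (by rw [hb3A']; exact htT),
      hcmemT F.c3Y', hcmemT F.c3Z',
      hcmemT F.tX, hcmemT F.tY, hcmemT F.tZ, hcmemT F.tX', hcmemT F.tY', hcmemT F.tZ']
  have hcent1 : ∀ g ∈ ({d1, d2, d3, t} : Set (chi G)), ∀ x : chi G,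
      Commute ((QuotientGroup.mk' T) g) ((QuotientGroup.mk' T) x) := by
    intro g hg x
    induction hmem6 x using Subgroup.closure_induction with
    | mem s hs => exact (comm_mem_iff T g s).mp (hcentbase g hg s hs)
    | one => simp only [map_one]; exact Commute.one_right _
    | mul x y hx hy ihx ihy => simp only [map_mul]; exact ihx.mul_right ihy
    | inv x hx ih => simp only [map_inv]; exact ih.inv_right
  have hcent : ∀ e ∈ E, ∀ x : chi G,
      Commute ((QuotientGroup.mk' T) e) ((QuotientGroup.mk' T) x) := by
    intro e he
    induction he using Subgroup.closure_induction with
    | mem g hg => exact hcent1 g hg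
    | one => intro x; simp only [map_one]; exact Commute.one_left _
    | mul u v hu hv ihu ihv =>
        intro x; simp only [map_mul]; exact (ihu x).mul_left (ihv x)
    | inv u hu ih => intro x; simp only [map_inv]; exact (ih x).inv_left
  have hcentT : ∀ e ∈ E, ∀ x : chi G, ⁅e, x⁆ ∈ T :=
    fun e he x => (comm_mem_iff T e x).mpr (hcent e he x)
  -- lower central series
  have hlcs1 : (⊤ : Subgroup (chi G)).lowerCentralSeries 1 ≤ E := by
    rw [Subgroup.top_lowerCentralSeries_one, commutator_def]
    exact Subgroup.commutator_le.mpr fun x _ y _ => habelE x y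
  have hlcs2 : (⊤ : Subgroup (chi G)).lowerCentralSeries 2 ≤ T := by
    have hsucc : (⊤ : Subgroup (chi G)).lowerCentralSeries 2 = ⁅(⊤ : Subgroup (chi G)).lowerCentralSeries 1, ⊤⁆ := rfl
    rw [hsucc]
    exact le_trans (Subgroup.commutator_mono hlcs1 le_rfl)
      (Subgroup.commutator_le.mpr fun e he x _ => hcentT e he x)
  have hlcs3 : (⊤ : Subgroup (chi G)).lowerCentralSeries 3 = ⊥ := by
    rw [eq_bot_iff, show (⊤ : Subgroup (chi G)).lowerCentralSeries 3 = ⁅(⊤ : Subgroup (chi G)).lowerCentralSeries 2, ⊤⁆ from rfl]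
    refine Subgroup.commutator_le.mpr fun x hx y _ => ?_
    rw [Subgroup.mem_bot]
    have hxc := Subgroup.mem_center_iff.mp (hTcenter (hlcs2 hx))
    exact commutatorElement_eq_one_iff_commute.mpr (hxc y).symm
  have htlcs2 : t ∈ (⊤ : Subgroup (chi G)).lowerCentralSeries 2 := by
    rw [show (⊤ : Subgroup (chi G)).lowerCentralSeries 2 = ⁅(⊤ : Subgroup (chi G)).lowerCentralSeries 1, ⊤⁆ from rfl]
    have hd1lcs : d1 ∈ (⊤ : Subgroup (chi G)).lowerCentralSeries 1 := by
      rw [Subgroup.top_lowerCentralSeries_one, commutator_def, ← hbAB']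
      exact Subgroup.commutator_mem_commutator (Subgroup.mem_top _) (Subgroup.mem_top _)
    rw [← hb1C]
    exact Subgroup.commutator_mem_commutator hd1lcs (Subgroup.mem_top _)
  -- D = E
  have hd1D : d1 ∈ DSubgroup G := by
    rw [← hbAB']
    exact Subgroup.commutator_mem_commutator (MonoidHom.mem_range.mpr ⟨a, hA.symm⟩)
      (MonoidHom.mem_range.mpr ⟨b, hB'.symm⟩)
  have hd2D : d2 ∈ DSubgroup G := by
    rw [← hbAC']
    exact Subgroup.commutator_mem_commutator (MonoidHom.mem_range.mpr ⟨a, hA.symm⟩)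
      (MonoidHom.mem_range.mpr ⟨c, hC'.symm⟩)
  have hd3D : d3 ∈ DSubgroup G := by
    rw [← hbBC']
    exact Subgroup.commutator_mem_commutator (MonoidHom.mem_range.mpr ⟨b, hB.symm⟩)
      (MonoidHom.mem_range.mpr ⟨c, hC'.symm⟩)
  have hζD : (A * B) * C' * ((A * B) * C') ∈ DSubgroup G := by
    have hsab : chiIota G (a * b) * chiIota G (a * b) = 1 := by
      rw [← map_mul, h2, map_one]
    have h := Subgroup.commutator_mem_commutator
      (MonoidHom.mem_range.mpr ⟨a * b, rfl⟩ :
        chiIota G (a * b) ∈ (chiIota G).range)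
      (MonoidHom.mem_range.mpr ⟨c, hC'.symm⟩ : C' ∈ (chiIotaPhi G).range)
    rwa [brk_eq hsab sC', map_mul, ← hA, ← hB] at h
  have htD : t ∈ DSubgroup G := by
    rw [F.tD]
    exact mul_mem hd3D (mul_mem hζD hd2D)
  have hDsubE : DSubgroup G ≤ E := Subgroup.commutator_le.mpr fun x _ y _ => habelE x y
  have hEsubD : E ≤ DSubgroup G := by
    refine (Subgroup.closure_le _).mpr ?_
    intro x hx
    simp only [Set.mem_insert_iff, Set.mem_singleton_iff] at hx
    rcases hx with rfl | rfl | rfl | rfl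
    exacts [hd1D, hd2D, hd3D, htD]
  have hDE : DSubgroup G = E := le_antisymm hDsubE hEsubD
  -- counting D via the quad homomorphism
  set Qχ := quadHom d1 d2 d3 t F.sq1 F.sq2 F.sq3 F.sqt F.c12 F.c13 F.td1.symm F.c23
    F.td2.symm F.td3.symm with hQχ
  have hQapp : ∀ v : M2 × M2 × M2 × M2, Qχ v =
      d1 ^ (Multiplicative.toAdd v.1).val * (d2 ^ (Multiplicative.toAdd v.2.1).val *
        (d3 ^ (Multiplicative.toAdd v.2.2.1).val * t ^ (Multiplicative.toAdd v.2.2.2).val)) := by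
    intro v
    rw [hQχ]
    exact quadHom_apply d1 d2 d3 t F.sq1 F.sq2 F.sq3 F.sqt F.c12 F.c13 F.td1.symm F.c23
      F.td2.symm F.td3.symm v
  have hQ1 : Qχ (Multiplicative.ofAdd 1, 1, 1, 1) = d1 := by
    rw [hQapp]; simp [show ((1 : ZMod 2)).val = 1 from rfl]
  have hQ2 : Qχ (1, Multiplicative.ofAdd 1, 1, 1) = d2 := by
    rw [hQapp]; simp [show ((1 : ZMod 2)).val = 1 from rfl]
  have hQ3 : Qχ (1, 1, Multiplicative.ofAdd 1, 1) = d3 := by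
    rw [hQapp]; simp [show ((1 : ZMod 2)).val = 1 from rfl]
  have hQ4 : Qχ (1, 1, 1, Multiplicative.ofAdd 1) = t := by
    rw [hQapp]; simp [show ((1 : ZMod 2)).val = 1 from rfl]
  have hmemEQ : ∀ v, Qχ v ∈ E := by
    intro v
    rw [hQapp]
    exact mul_mem (pow_mem hd1E _)
      (mul_mem (pow_mem hd2E _) (mul_mem (pow_mem hd3E _) (pow_mem htE _)))
  have hrangeE : Qχ.range = E := by
    refine le_antisymm ?_ ((Subgroup.closure_le _).mpr ?_)
    · rintro x ⟨v, rfl⟩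
      exact hmemEQ v
    · intro x hx
      simp only [Set.mem_insert_iff, Set.mem_singleton_iff] at hx
      rcases hx with rfl | rfl | rfl | rfl
      exacts [⟨_, hQ1⟩, ⟨_, hQ2⟩, ⟨_, hQ3⟩, ⟨_, hQ4⟩]
  have hV4sq : ∀ v : M2 × M2 × M2 × M2, v * v = 1 := by decide
  have hDsq : ∀ x ∈ DSubgroup G, x * x = 1 := by
    intro x hx
    have hxE : x ∈ Qχ.range := by rw [hrangeE]; exact hDsubE hx
    obtain ⟨v, rfl⟩ := hxE
    rw [← map_mul, hV4sq v, map_one]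
  have heq : ∀ v : M2 × M2 × M2 × M2, ψ (Qχ v) =
      dK1 ^ (Multiplicative.toAdd v.1).val * (dK2 ^ (Multiplicative.toAdd v.2.1).val *
        (dK3 ^ (Multiplicative.toAdd v.2.2.1).val * tK ^ (Multiplicative.toAdd v.2.2.2).val)) := by
    intro v
    rw [hQapp]
    simp only [map_mul, map_pow, hψd1, hψd2, hψd3, hψt]
  have hjinj : Function.Injective ⇑Qχ.rangeRestrict := by
    intro v w h
    have h' : Qχ v = Qχ w := congrArg Subtype.val h
    have h2' := congrArg ψ h'
    rw [heq v, heq w] at h2'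
    exact hKinj h2'
  have hcardV4 : Nat.card (M2 × M2 × M2 × M2) = 16 := by
    simp [Nat.card_prod, Nat.card_eq_fintype_card]
  have hDcard : Nat.card ↥(DSubgroup G) = 16 := by
    rw [hDE, ← hrangeE]
    haveI : Finite ↥Qχ.range := Finite.of_surjective _ Qχ.rangeRestrict_surjective
    have hle : Nat.card ↥Qχ.range ≤ 16 := by
      have h := Nat.card_le_card_of_surjective _ Qχ.rangeRestrict_surjective
      rwa [hcardV4] at h
    have hge : 16 ≤ Nat.card ↥Qχ.range := by
      have h := Nat.card_le_card_of_injective _ hjinj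
      rwa [hcardV4] at h
    omega
  have hTeq : ⁅DSubgroup G, (chiIota G).range⁆ = T := by
    refine le_antisymm (Subgroup.commutator_le.mpr fun d hd x _ => hcentT d (hDsubE hd) x)
      ((Subgroup.closure_le _).mpr ?_)
    intro x hx
    rw [Set.mem_singleton_iff] at hx
    subst hx
    rw [SetLike.mem_coe, ← hb1C]
    exact Subgroup.commutator_mem_commutator hd1D
      (MonoidHom.mem_range.mpr ⟨c, hC.symm⟩ : C ∈ (chiIota G).range)
  have hTcard : Nat.card ↥T = 2 := by
    rw [hTdef, ← Subgroup.zpowers_eq_closure, Nat.card_zpowers]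
    exact orderOf_eq_prime (by rw [pow_two]; exact F.sqt) htne1
  refine ⟨⟨hlcs3, ?_⟩, ⟨hDE, hDcard, hDsq⟩, ⟨hTeq, by rw [hTeq]; exact hTcard⟩, ?_⟩
  · intro hbot
    have h := htlcs2
    rw [hbot] at h
    exact htne1 (Subgroup.mem_bot.mp h)
  · intro hle
    have hsp : spow (DSubgroup G) 4 ≤ ⊥ := by
      refine (Subgroup.closure_le _).mpr ?_
      rintro x ⟨h, hh, rfl⟩
      simp only [SetLike.mem_coe, Subgroup.mem_bot]
      have hsq : h * h = 1 := hDsq h hh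
      calc h ^ 4 = (h * h) * (h * h) := by
            rw [show (4 : ℕ) = 2 + 2 from rfl, pow_add, pow_two]
        _ = 1 := by rw [hsq]; group
    have htmem : t ∈ ⁅DSubgroup G, (⊤ : Subgroup (chi G))⁆ := by
      rw [← hb1C]
      exact Subgroup.commutator_mem_commutator hd1D (Subgroup.mem_top _)
    exact htne1 (Subgroup.mem_bot.mp (hsp (hle htmem)))
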